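/- Let F be a stack on K and W = ⟨L = K_0, …, K_k = K⟩ an F-sequence. If K_i and K_j (j > i) are two consecutive critical complexes for W (i.e., K_{i+1}, …, K_{j-1} are produced by expansions), then for each λ ∈ ℤ, the complex F_λ ∩ K_{j-1} collapses onto F_λ ∩ K_i. -/
import Mathlib


open Finset

abbrev Simplex : Type := Finset ℕ
abbrev Cplx : Type := Finset (Finset ℕ)

/-- A simplicial complex: a finite set of nonempty finite sets closed under
taking nonempty subsets. -/
def IsSimpComplex (K : Cplx) : Prop :=
  (∀ τ ∈ K, τ.Nonempty) ∧ ∀ τ ∈ K, ∀ σ : Simplex, σ ⊆ τ → σ.Nonempty → σ ∈ K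

/-- A cosimplicial complex: for all σ, τ ∈ S, every ν with σ ⊆ ν ⊆ τ is in S. -/
def IsCosimplicial (S : Cplx) : Prop :=
  ∀ σ ∈ S, ∀ τ ∈ S, ∀ ν : Simplex, σ ⊆ ν → ν ⊆ τ → ν ∈ S

/-- S is open for K. -/
def IsOpenFor (K S : Cplx) : Prop :=
  S ⊆ K ∧ ∀ σ ∈ S, ∀ τ ∈ K, σ ⊆ τ → τ ∈ S

/-- S is closed for K. -/
def IsClosedFor (K S : Cplx) : Prop :=
  S ⊆ K ∧ IsSimpComplex S

/-- Closure of a finite set of simplexes: all nonempty subsets of members. -/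
def cl (S : Cplx) : Cplx :=
  S.biUnion fun τ => τ.powerset.filter fun σ => σ.Nonempty

/-- (σ, τ) is a free pair for K: τ is the only face of K properly containing σ. -/
def IsFreePair (K : Cplx) (σ τ : Simplex) : Prop :=
  σ ∈ K ∧ τ ∈ K ∧ σ ⊂ τ ∧ ∀ ρ ∈ K, σ ⊂ ρ → ρ = τ

/-- K' is an elementary expansion of K. -/
def ElemExpansion (K' K : Cplx) : Prop :=
  ∃ σ τ : Simplex, σ ∉ K ∧ τ ∉ K ∧ K' = K ∪ {σ, τ} ∧ IsFreePair K' σ τ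

/-- K' is an elementary filling of K: K' = K ∪ {ν} with ν a facet of K'. -/
def ElemFilling (K' K : Cplx) : Prop :=
  ∃ ν : Simplex, ν ∉ K ∧ K' = insert ν K ∧ ∀ ρ ∈ K', ν ⊆ ρ → ρ = ν

/-- A collapses onto B: a sequence of elementary collapses from A to B. -/
def Collapses (A B : Cplx) : Prop :=
  Relation.ReflTransGen (fun X Y : Cplx => ElemExpansion X Y) A B

/-- A Morse sequence from L to K, as W 0, …, W k, consisting of simplicial
complexes, each step an elementary expansion or an elementary filling. -/
def MorseSeq (L K : Cplx) (k : ℕ) (W : ℕ → Cplx) : Prop :=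
  W 0 = L ∧ W k = K ∧ (∀ i ≤ k, IsSimpComplex (W i)) ∧
  ∀ i < k, ElemExpansion (W (i+1)) (W i) ∨ ElemFilling (W (i+1)) (W i)

/-- F is a stack on S: monotone with respect to inclusion. -/
def IsStackOn (S : Cplx) (F : Simplex → ℤ) : Prop :=
  ∀ σ ∈ S, ∀ τ ∈ S, σ ⊆ τ → F σ ≤ F τ

/-- (σ, τ) is a regular pair of the Morse sequence W (of length k). -/
def RegularPair (k : ℕ) (W : ℕ → Cplx) (σ τ : Simplex) : Prop :=
  ∃ i < k, σ ∉ W i ∧ τ ∉ W i ∧ W (i+1) = W i ∪ {σ, τ} ∧ IsFreePair (W (i+1)) σ τ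

/-- An F-sequence: a Morse sequence whose regular pairs satisfy F σ = F τ. -/
def FSeq (F : Simplex → ℤ) (L K : Cplx) (k : ℕ) (W : ℕ → Cplx) : Prop :=
  MorseSeq L K k W ∧ ∀ σ τ : Simplex, RegularPair k W σ τ → F σ = F τ

/-- A flooding sequence: an F-sequence from ∅ to K such that F σ ≤ F τ whenever
σ ∈ K_i and τ ∈ K_j appears strictly later (τ ∉ K_i), with i < j. -/
def Flooding (F : Simplex → ℤ) (K : Cplx) (k : ℕ) (W : ℕ → Cplx) : Prop :=
  FSeq F ∅ K k W ∧
  ∀ i j : ℕ, i < j → j ≤ k → ∀ σ ∈ W i, ∀ τ ∈ W j, τ ∉ W i → F σ ≤ F τ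

/-- Coboundary δ(ν, S) of ν in S. -/
def cob (S : Cplx) (ν : Simplex) : Cplx :=
  S.filter fun μ => ν ⊆ μ ∧ μ.card = ν.card + 1

/-- Boundary ∂(ν, S) of ν in S. -/
def bdry (S : Cplx) (ν : Simplex) : Cplx :=
  S.filter fun η => η ⊆ ν ∧ η.card + 1 = ν.card

theorem collapse_theorem_for_stacks (K L : Cplx) (F : Simplex → ℤ)
    (k : ℕ) (W : ℕ → Cplx)
    (hK : IsSimpComplex K) (hF : IsStackOn K F)
    (hW : FSeq F L K k W)
    (i j : ℕ) (hij : i < j) (hjk : j ≤ k) (hi : 1 ≤ i)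
    (hcriti : ElemFilling (W i) (W (i-1)))
    (hcritj : ElemFilling (W j) (W (j-1)))
    (hreg : ∀ m, i ≤ m → m < j - 1 → ElemExpansion (W (m+1)) (W m))
    (lam : ℤ) :
    Collapses ((K.filter fun ν => F ν ≤ lam) ∩ W (j-1))
      ((K.filter fun ν => F ν ≤ lam) ∩ W i) := by
  obtain ⟨⟨hW0, hWk, hWsc, hWstep⟩, hWreg⟩ := hW
  have mono : ∀ a b, a ≤ b → b ≤ k → W a ⊆ W b := by
    intro a b hab hbk
    induction b, hab using Nat.le_induction with
    | base => exact subset_rfl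
    | succ b hb ih =>
      refine (ih (by omega)).trans ?_
      rcases hWstep b (by omega) with ⟨σ, τ, _, _, heq, _⟩ | ⟨ν, _, heq, _⟩
      · rw [heq]; exact Finset.subset_union_left
      · rw [heq]; exact Finset.subset_insert _ _
  have WsubK : ∀ m, m ≤ k → W m ⊆ K := fun m hm => hWk ▸ mono m k hm le_rfl
  set A : ℕ → Cplx := fun m => (K.filter fun ν => F ν ≤ lam) ∩ W m with hA
  have step : ∀ m, i ≤ m → m < j - 1 → Collapses (A (m+1)) (A m) := by
    intro m hm hm2
    have hmk : m < k := by omega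
    obtain ⟨σ, τ, hσ, hτ, heq, hfree⟩ := hreg m hm hm2
    have hFeq : F σ = F τ := hWreg σ τ ⟨m, hmk, hσ, hτ, heq, hfree⟩
    have hσK : σ ∈ K := WsubK (m+1) (by omega) hfree.1
    have hτK : τ ∈ K := WsubK (m+1) (by omega) hfree.2.1
    by_cases h : F σ ≤ lam
    · have hτlam : F τ ≤ lam := hFeq ▸ h
      apply Relation.ReflTransGen.single
      refine ⟨σ, τ, ?_, ?_, ?_, ?_, ?_, hfree.2.2.1, ?_⟩
      · exact fun hc => hσ (Finset.mem_inter.mp hc).2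
      · exact fun hc => hτ (Finset.mem_inter.mp hc).2
      · ext ν
        simp only [hA, Finset.mem_inter, Finset.mem_filter, heq,
          Finset.mem_union, Finset.mem_insert, Finset.mem_singleton]
        constructor
        · rintro ⟨⟨hνK, hνlam⟩, hν | (rfl | rfl)⟩
          · exact Or.inl ⟨⟨hνK, hνlam⟩, hν⟩
          · exact Or.inr (Or.inl rfl)
          · exact Or.inr (Or.inr rfl)
        · rintro (⟨hf, hν⟩ | (rfl | rfl))
          · exact ⟨hf, Or.inl hν⟩
          · exact ⟨⟨hσK, h⟩, Or.inr (Or.inl rfl)⟩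
          · exact ⟨⟨hτK, hτlam⟩, Or.inr (Or.inr rfl)⟩
      · exact Finset.mem_inter.mpr ⟨Finset.mem_filter.mpr ⟨hσK, h⟩, hfree.1⟩
      · exact Finset.mem_inter.mpr ⟨Finset.mem_filter.mpr ⟨hτK, hτlam⟩, hfree.2.1⟩
      · exact fun ρ hρ hsub => hfree.2.2.2 ρ (Finset.mem_inter.mp hρ).2 hsub
    · have heqA : A (m+1) = A m := by
        ext ν
        simp only [hA, Finset.mem_inter, Finset.mem_filter, heq,
          Finset.mem_union, Finset.mem_insert, Finset.mem_singleton]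
        constructor
        · rintro ⟨⟨hνK, hνlam⟩, hν | (rfl | rfl)⟩
          · exact ⟨⟨hνK, hνlam⟩, hν⟩
          · exact absurd hνlam h
          · exact absurd hνlam (hFeq ▸ h)
        · rintro ⟨hf, hν⟩; exact ⟨hf, Or.inl hν⟩
      rw [heqA]; exact Relation.ReflTransGen.refl
  have main : ∀ m, i ≤ m → m ≤ j - 1 → Collapses (A m) (A i) := by
    intro m
    induction m with
    | zero =>
      intro h1 _
      have : i = 0 := by omega
      rw [this]; exact Relation.ReflTransGen.refl
    | succ m ih =>
      intro h1 h2
      rcases Nat.lt_or_ge i (m+1) with hlt | hge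
      · exact (step m (by omega) (by omega)).trans (ih (by omega) (by omega))
      · have : i = m + 1 := by omega
        rw [this]; exact Relation.ReflTransGen.refl
  exact main (j-1) (by omega) le_rfl
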